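/- Let X and Z be random variables on a probability space with P(Z > 0) > 0, and let N be a standard normal random variable. Then for every ε > 0, sup_{z ∈ ℝ} |P(X/Z ≤ z) - P(N ≤ z)| ≤ sup_{z ∈ ℝ} |P(X ≤ z) - P(N ≤ z)| + P(|Z - 1| > ε) + ε. -/

import Mathlib

open MeasureTheory ProbabilityTheory Set Real


lemma mp_pdf_eq (t : ℝ) : gaussianPDFReal 0 1 t = (Real.sqrt (2*Real.pi))⁻¹ * Real.exp (-(t^2)/2) := by
  simp [gaussianPDFReal]

lemma mp_sqrt_ge : (2.5:ℝ) ≤ Real.sqrt (2*Real.pi) := by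
  rw [show (2.5:ℝ) = Real.sqrt (2.5^2) by rw [Real.sqrt_sq]; norm_num]
  apply Real.sqrt_le_sqrt
  nlinarith [Real.pi_gt_d6]

lemma mp_inv_sqrt_le : (Real.sqrt (2*Real.pi))⁻¹ ≤ 0.4 := by
  have h2 : (0:ℝ) < Real.sqrt (2*Real.pi) := by linarith [mp_sqrt_ge]
  rw [inv_le_iff_one_le_mul₀ h2]
  nlinarith [mp_sqrt_ge]

lemma mp_mul_pdf_le {t : ℝ} (ht : 0 ≤ t) : t * gaussianPDFReal 0 1 t ≤ 1/4 := by
  rw [mp_pdf_eq]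
  have h1 : t ≤ Real.exp ((t^2-1)/2) := by
    calc t = (t - 1) + 1 := by ring
    _ ≤ Real.exp (t-1) := Real.add_one_le_exp _
    _ ≤ Real.exp ((t^2-1)/2) := by apply Real.exp_le_exp.2; nlinarith [sq_nonneg (t-1)]
  have h2 : t * Real.exp (-(t^2)/2) ≤ Real.exp (-(1/2)) := by
    calc t * Real.exp (-(t^2)/2) ≤ Real.exp ((t^2-1)/2) * Real.exp (-(t^2)/2) :=
          mul_le_mul_of_nonneg_right h1 (Real.exp_nonneg _)
    _ = Real.exp (-(1/2)) := by rw [← Real.exp_add]; ring_nf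
  have e1 : Real.exp (-(1/2:ℝ)) * Real.exp (-(1/2:ℝ)) = Real.exp (-1) := by
    rw [← Real.exp_add]; norm_num
  have e2 : Real.exp (-(1:ℝ)) ≤ 0.37 := by
    rw [Real.exp_neg, inv_le_iff_one_le_mul₀ (Real.exp_pos 1)]
    nlinarith [Real.exp_one_gt_d9]
  have e3 : Real.exp (-(1/2:ℝ)) ≤ 0.61 := by
    nlinarith [Real.exp_pos (-(1/2:ℝ))]
  have h4 : t * Real.exp (-(t^2)/2) ≥ 0 := mul_nonneg ht (Real.exp_nonneg _)
  calc t * ((Real.sqrt (2*Real.pi))⁻¹ * Real.exp (-(t^2)/2))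
      = (Real.sqrt (2*Real.pi))⁻¹ * (t * Real.exp (-(t^2)/2)) := by ring
    _ ≤ 0.4 * 0.61 := by
        apply mul_le_mul mp_inv_sqrt_le (h2.trans e3) h4 (by norm_num)
    _ ≤ 1/4 := by norm_num

lemma mp_pdf_anti {a t : ℝ} (ha : 0 ≤ a) (hat : a ≤ t) :
    gaussianPDFReal 0 1 t ≤ gaussianPDFReal 0 1 a := by
  rw [mp_pdf_eq, mp_pdf_eq]
  have h : Real.exp (-(t^2)/2) ≤ Real.exp (-(a^2)/2) := by
    apply Real.exp_le_exp.2; nlinarith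
  have h2 : (0:ℝ) ≤ (Real.sqrt (2*Real.pi))⁻¹ := inv_nonneg.2 (Real.sqrt_nonneg _)
  nlinarith

lemma mp_Iic_split {a b : ℝ} (hab : a ≤ b) :
    ((gaussianReal 0 1) (Iic b)).toReal
      = ((gaussianReal 0 1) (Iic a)).toReal + ((gaussianReal 0 1) (Ioc a b)).toReal := by
  rw [← ENNReal.toReal_add (measure_ne_top _ _) (measure_ne_top _ _),
    ← measure_union (Iic_disjoint_Ioc le_rfl) measurableSet_Ioc, Iic_union_Ioc_eq_Iic hab]

lemma mp_Ioc_le {a b C : ℝ} (hab : a ≤ b) (hC : ∀ t ∈ Icc a b, gaussianPDFReal 0 1 t ≤ C) :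
    ((gaussianReal 0 1) (Ioc a b)).toReal ≤ (b - a) * C := by
  rw [gaussianReal_apply_eq_integral 0 one_ne_zero, ENNReal.toReal_ofReal]
  · calc ∫ x in Ioc a b, gaussianPDFReal 0 1 x
        ≤ ∫ _x in Ioc a b, C := by
          apply setIntegral_mono_on ((integrable_gaussianPDFReal 0 1).restrict)
            (integrableOn_const measure_Ioc_lt_top.ne) measurableSet_Ioc
          intro t ht
          exact hC t ⟨ht.1.le, ht.2⟩
      _ = (b - a) * C := by
          rw [setIntegral_const, Real.volume_real_Ioc_of_le hab, smul_eq_mul]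
  · exact setIntegral_nonneg measurableSet_Ioc fun t _ => gaussianPDFReal_nonneg 0 1 t

lemma mp_map_neg : (gaussianReal 0 1).map ((-1 : ℝ) * ·) = gaussianReal 0 1 := by
  rw [gaussianReal_map_const_mul (-1 : ℝ)]
  norm_num

lemma mp_Iic_neg (t : ℝ) : (gaussianReal 0 1) (Iic (-t)) = (gaussianReal 0 1) (Ici t) := by
  conv_lhs => rw [← mp_map_neg]
  rw [Measure.map_apply (by fun_prop) measurableSet_Iic]
  congr 1
  ext x
  simp only [mem_preimage, mem_Iic, mem_Ici]
  constructor <;> intro h <;> nlinarith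

lemma mp_Phi_neg (t : ℝ) :
    ((gaussianReal 0 1) (Iic (-t))).toReal = 1 - ((gaussianReal 0 1) (Iic t)).toReal := by
  rw [mp_Iic_neg]
  have h0 : (gaussianReal 0 1) {t} = 0 :=
    (gaussianReal_absolutelyContinuous 0 one_ne_zero) (Real.volume_singleton)
  have h1 : (gaussianReal 0 1) (Ici t) = (gaussianReal 0 1) (Ioi t) := by
    refine le_antisymm ?_ (measure_mono Ioi_subset_Ici_self)
    rw [← Ioi_union_left]
    exact (measure_union_le _ _).trans (by rw [h0, add_zero])
  have h2 : (gaussianReal 0 1) (Iic t) + (gaussianReal 0 1) (Ioi t) = 1 := by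
    rw [← Set.compl_Iic]
    rw [measure_add_measure_compl measurableSet_Iic, measure_univ]
  have h3 := congrArg ENNReal.toReal h2
  rw [ENNReal.toReal_add (measure_ne_top _ _) (measure_ne_top _ _)] at h3
  rw [h1]
  simp at h3 ⊢
  linarith

lemma mp_Phi_zero : ((gaussianReal 0 1) (Iic (0:ℝ))).toReal = 1/2 := by
  have := mp_Phi_neg 0
  rw [neg_zero] at this
  linarith

lemma mp_toReal_le_one {α : Type*} [MeasurableSpace α] (ν : Measure α) [IsProbabilityMeasure ν]
    (s : Set α) : (ν s).toReal ≤ 1 := by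
  simpa using ENNReal.toReal_mono ENNReal.one_ne_top (prob_le_one (μ := ν) (s := s))

lemma mp_Phi_mono {a b : ℝ} (hab : a ≤ b) :
    ((gaussianReal 0 1) (Iic a)).toReal ≤ ((gaussianReal 0 1) (Iic b)).toReal :=
  ENNReal.toReal_mono (measure_ne_top _ _) (measure_mono (Iic_subset_Iic.2 hab))

lemma mp_gap_up {z ε : ℝ} (hz : 0 ≤ z) (hε : 0 < ε) :
    ((gaussianReal 0 1) (Iic (z*(1+ε)))).toReal - ((gaussianReal 0 1) (Iic z)).toReal ≤ ε := by
  have hab : z ≤ z*(1+ε) := by nlinarith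
  rw [mp_Iic_split hab]
  have h1 : ((gaussianReal 0 1) (Ioc z (z*(1+ε)))).toReal
      ≤ (z*(1+ε) - z) * gaussianPDFReal 0 1 z :=
    mp_Ioc_le hab fun t ht => mp_pdf_anti hz ht.1
  have h2 := mp_mul_pdf_le hz
  have h3 : 0 ≤ gaussianPDFReal 0 1 z := gaussianPDFReal_nonneg 0 1 z
  nlinarith

lemma mp_gap_down {z ε : ℝ} (hz : 0 ≤ z) (hε : 0 < ε) (hε1 : ε < 1) :
    ((gaussianReal 0 1) (Iic z)).toReal - ((gaussianReal 0 1) (Iic (z*(1-ε)))).toReal ≤ ε := by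
  have ha : 0 ≤ z*(1-ε) := by nlinarith
  have hab : z*(1-ε) ≤ z := by nlinarith
  rcases le_or_gt ε (3/4) with h34 | h34
  · rw [mp_Iic_split hab]
    have h1 : ((gaussianReal 0 1) (Ioc (z*(1-ε)) z)).toReal
        ≤ (z - z*(1-ε)) * gaussianPDFReal 0 1 (z*(1-ε)) :=
      mp_Ioc_le hab fun t ht => mp_pdf_anti ha ht.1
    have h2 := mp_mul_pdf_le ha
    have h3 : 0 ≤ gaussianPDFReal 0 1 (z*(1-ε)) := gaussianPDFReal_nonneg 0 1 _
    have h4 : z * gaussianPDFReal 0 1 (z*(1-ε)) ≤ 1 := by nlinarith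
    nlinarith
  · have h1 : ((gaussianReal 0 1) (Iic z)).toReal ≤ 1 := mp_toReal_le_one _ _
    have h2 : (1:ℝ)/2 ≤ ((gaussianReal 0 1) (Iic (z*(1-ε)))).toReal := by
      rw [← mp_Phi_zero]; exact mp_Phi_mono ha
    linarith

lemma mp_gap_up_neg {z ε : ℝ} (hz : z ≤ 0) (hε : 0 < ε) :
    ((gaussianReal 0 1) (Iic z)).toReal - ((gaussianReal 0 1) (Iic (z*(1+ε)))).toReal ≤ ε := by
  have h1 := mp_gap_up (z := -z) (neg_nonneg.2 hz) hε
  have e1 := mp_Phi_neg (-z)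
  rw [neg_neg] at e1
  have e2 := mp_Phi_neg ((-z)*(1+ε))
  rw [show -((-z)*(1+ε)) = z*(1+ε) by ring] at e2
  linarith

lemma mp_gap_down_neg {z ε : ℝ} (hz : z ≤ 0) (hε : 0 < ε) (hε1 : ε < 1) :
    ((gaussianReal 0 1) (Iic (z*(1-ε)))).toReal - ((gaussianReal 0 1) (Iic z)).toReal ≤ ε := by
  have h1 := mp_gap_down (z := -z) (neg_nonneg.2 hz) hε hε1
  have e1 := mp_Phi_neg (-z)
  rw [neg_neg] at e1
  have e2 := mp_Phi_neg ((-z)*(1-ε))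
  rw [show -((-z)*(1-ε)) = z*(1-ε) by ring] at e2
  linarith

lemma mp_sub {Ω : Type*} [MeasurableSpace Ω] (μ : Measure Ω) [IsProbabilityMeasure μ]
    {A B E : Set Ω} (h : A ⊆ B ∪ E) : (μ A).toReal ≤ (μ B).toReal + (μ E).toReal := by
  rw [← ENNReal.toReal_add (measure_ne_top _ _) (measure_ne_top _ _)]
  exact ENNReal.toReal_mono
    (ENNReal.add_ne_top.2 ⟨measure_ne_top _ _, measure_ne_top _ _⟩)
    ((measure_mono h).trans (measure_union_le _ _))
/-- Michel–Pfanzagl lemma: Kolmogorov distance bound for a ratio. -/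
theorem michel_pfanzagl {Ω : Type*} [MeasurableSpace Ω] (μ : Measure Ω)
    [IsProbabilityMeasure μ] (X Z : Ω → ℝ) (hZ : 0 < μ {ω | 0 < Z ω}) :
    ∀ ε > (0 : ℝ),
      (⨆ z : ℝ, |(μ {ω | X ω / Z ω ≤ z}).toReal - ((gaussianReal 0 1) (Iic z)).toReal|)
        ≤ (⨆ z : ℝ, |(μ {ω | X ω ≤ z}).toReal - ((gaussianReal 0 1) (Iic z)).toReal|)
          + (μ {ω | ε < |Z ω - 1|}).toReal + ε := by
  intro ε hε
  have habs : ∀ (s : Set ℝ) (t : Set Ω),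
      |(μ t).toReal - ((gaussianReal 0 1) s).toReal| ≤ 1 := by
    intro s t
    rw [abs_sub_le_iff]
    constructor
    · linarith [mp_toReal_le_one μ t, ENNReal.toReal_nonneg (a := (gaussianReal 0 1) s)]
    · linarith [mp_toReal_le_one (gaussianReal 0 1) s, ENNReal.toReal_nonneg (a := μ t)]
  have hbdd : BddAbove (Set.range fun w : ℝ =>
      |(μ {ω | X ω ≤ w}).toReal - ((gaussianReal 0 1) (Iic w)).toReal|) := by
    refine ⟨1, ?_⟩
    rintro x ⟨w, rfl⟩
    exact habs _ _
  have hK : ∀ w : ℝ, |(μ {ω | X ω ≤ w}).toReal - ((gaussianReal 0 1) (Iic w)).toReal|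
      ≤ ⨆ z : ℝ, |(μ {ω | X ω ≤ z}).toReal - ((gaussianReal 0 1) (Iic z)).toReal| :=
    fun w => le_ciSup hbdd w
  have hK0 : 0 ≤ ⨆ z : ℝ, |(μ {ω | X ω ≤ z}).toReal - ((gaussianReal 0 1) (Iic z)).toReal| :=
    (abs_nonneg _).trans (hK 0)
  have hδ0 : 0 ≤ (μ {ω | ε < |Z ω - 1|}).toReal := ENNReal.toReal_nonneg
  rcases lt_or_ge ε 1 with hε1 | hε1
  · -- main case: ε < 1
    apply ciSup_le
    intro z
    rw [abs_sub_le_iff]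
    rcases le_or_gt 0 z with hz | hz
    · -- z ≥ 0
      have inc1 : {ω | X ω / Z ω ≤ z} ⊆ {ω | X ω ≤ z*(1+ε)} ∪ {ω | ε < |Z ω - 1|} := by
        intro ω hω
        by_cases hE : ε < |Z ω - 1|
        · exact Or.inr hE
        · left
          push_neg at hE
          rw [abs_le] at hE
          have hZω : 0 < Z ω := by linarith [hE.1]
          simp only [mem_setOf_eq] at hω ⊢
          have h1 : X ω ≤ z * Z ω := (div_le_iff₀ hZω).1 hω
          nlinarith [hE.2]
      have inc2 : {ω | X ω ≤ z*(1-ε)} ⊆ {ω | X ω / Z ω ≤ z} ∪ {ω | ε < |Z ω - 1|} := by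
        intro ω hω
        by_cases hE : ε < |Z ω - 1|
        · exact Or.inr hE
        · left
          push_neg at hE
          rw [abs_le] at hE
          have hZω : 0 < Z ω := by linarith [hE.1]
          simp only [mem_setOf_eq] at hω ⊢
          rw [div_le_iff₀ hZω]
          nlinarith [hE.1]
      have r1 := mp_sub μ inc1
      have r2 := mp_sub μ inc2
      have g1 := mp_gap_up hz hε
      have g2 := mp_gap_down hz hε hε1
      have k1 := abs_le.1 (hK (z*(1+ε)))
      have k2 := abs_le.1 (hK (z*(1-ε)))
      exact ⟨by linarith [k1.2], by linarith [k2.1]⟩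
    · -- z < 0
      have inc1 : {ω | X ω / Z ω ≤ z} ⊆ {ω | X ω ≤ z*(1-ε)} ∪ {ω | ε < |Z ω - 1|} := by
        intro ω hω
        by_cases hE : ε < |Z ω - 1|
        · exact Or.inr hE
        · left
          push_neg at hE
          rw [abs_le] at hE
          have hZω : 0 < Z ω := by linarith [hE.1]
          simp only [mem_setOf_eq] at hω ⊢
          have h1 : X ω ≤ z * Z ω := (div_le_iff₀ hZω).1 hω
          nlinarith [hE.1]
      have inc2 : {ω | X ω ≤ z*(1+ε)} ⊆ {ω | X ω / Z ω ≤ z} ∪ {ω | ε < |Z ω - 1|} := by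
        intro ω hω
        by_cases hE : ε < |Z ω - 1|
        · exact Or.inr hE
        · left
          push_neg at hE
          rw [abs_le] at hE
          have hZω : 0 < Z ω := by linarith [hE.1]
          simp only [mem_setOf_eq] at hω ⊢
          rw [div_le_iff₀ hZω]
          nlinarith [hE.2]
      have r1 := mp_sub μ inc1
      have r2 := mp_sub μ inc2
      have g1 := mp_gap_down_neg hz.le hε hε1
      have g2 := mp_gap_up_neg hz.le hε
      have k1 := abs_le.1 (hK (z*(1-ε)))
      have k2 := abs_le.1 (hK (z*(1+ε)))
      exact ⟨by linarith [k1.2], by linarith [k2.1]⟩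
  · -- trivial case: 1 ≤ ε
    apply ciSup_le
    intro z
    linarith [habs (Iic z) {ω | X ω / Z ω ≤ z}]
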